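/- arXiv:2211.01410 — 2 statements merged into one kernel-verified Lean document; each statement's English description precedes it below -/
import Mathlib

section
/- For every natural number n, |T(n+1) − α·T(n)| < 2·α^(−n/2)/|β − γ|, where α is the Tribonacci constant and β, γ are the two non-real complex roots of x³ = x² + x + 1. -/
/-- The Tribonacci sequence: T(0)=0, T(1)=0, T(2)=1,
    T(n+3) = T(n+2) + T(n+1) + T(n). -/
def trib : ℕ → ℕ
  | 0 => 0
  | 1 => 0
  | 2 => 1
  | n + 3 => trib (n + 2) + trib (n + 1) + trib n

lemma trib_pos (k : ℕ) : 0 < trib (k + 2) := by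
  induction k using Nat.strong_induction_on with
  | _ k ih =>
    match k with
    | 0 => simp [trib]
    | m + 1 =>
      have := ih m (by omega)
      show 0 < trib (m + 3)
      rw [trib]
      omega

/-- For every natural number `n`, `|T(n+1) − α·T(n)| < 2·α^(−n/2)/|β − γ|`,
    where `α` is the Tribonacci constant (the unique real root of `x³ = x² + x + 1`)
    and `β`, `γ` are the two non-real complex roots of `x³ = x² + x + 1`. -/
theorem trib_alpha_diff_bound (α : ℝ) (hα : α ^ 3 = α ^ 2 + α + 1)
    (β γ : ℂ) (hβ : β ^ 3 = β ^ 2 + β + 1) (hγ : γ ^ 3 = γ ^ 2 + γ + 1)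
    (hβim : β.im ≠ 0) (hγim : γ.im ≠ 0) (hβγ : β ≠ γ) (n : ℕ) :
    |(trib (n + 1) : ℝ) - α * trib n| < 2 * α ^ (-(n : ℝ) / 2) / ‖β - γ‖ := by
  have hα1 : 1 < α := by nlinarith [sq_nonneg α, sq_nonneg (α-1), sq_nonneg (α+1)]
  have hα2 : α < 2 := by nlinarith [sq_nonneg α, sq_nonneg (α-1), sq_nonneg (α-2)]
  have hαpos : (0:ℝ) < α := by linarith
  have hαC : (α:ℂ) ^ 3 = (α:ℂ) ^ 2 + (α:ℂ) + 1 := by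
    have := congrArg (fun x : ℝ => (x : ℂ)) hα
    push_cast at this
    exact this
  -- distinctness
  have hαβ : (α:ℂ) ≠ β := by
    intro h
    exact hβim (by rw [← h]; simp)
  have hαγ : (α:ℂ) ≠ γ := by
    intro h
    exact hγim (by rw [← h]; simp)
  have hβγ' : β - γ ≠ 0 := sub_ne_zero.mpr hβγ
  -- two distinct roots of the cubic satisfy this quadratic relation
  have key2 : ∀ u v : ℂ, u ^ 3 = u ^ 2 + u + 1 → v ^ 3 = v ^ 2 + v + 1 → u ≠ v →
      u ^ 2 + u * v + v ^ 2 = u + v + 1 := by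
    intro u v hu hv huv
    have h : (u - v) * (u ^ 2 + u * v + v ^ 2) = (u - v) * (u + v + 1) := by
      linear_combination hu - hv
    exact mul_left_cancel₀ (sub_ne_zero.mpr huv) h
  -- Vieta
  have e1 : (α:ℂ) + β + γ = 1 := by
    have h1 := key2 (α:ℂ) β hαC hβ hαβ
    have h2 := key2 (α:ℂ) γ hαC hγ hαγ
    apply mul_left_cancel₀ hβγ'
    linear_combination h1 - h2
  have e2 : β * γ = (α:ℂ) ^ 2 - α - 1 := by
    have h3 := key2 β γ hβ hγ hβγ
    linear_combination (β + γ - (α:ℂ)) * e1 - h3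
  have hprod : (α:ℂ) * (β * γ) = 1 := by
    linear_combination (α:ℂ) * e2 + hαC
  -- γ is the conjugate of β
  have hconj : γ = starRingEnd ℂ β := by
    by_contra hne
    have hδ : (starRingEnd ℂ β) ^ 3 = (starRingEnd ℂ β) ^ 2 + (starRingEnd ℂ β) + 1 := by
      have := congrArg (starRingEnd ℂ) hβ
      simpa using this
    have hδβ : β ≠ starRingEnd ℂ β := by
      intro h
      exact hβim ((Complex.conj_eq_iff_im.mp h.symm))
    have h4 := key2 β (starRingEnd ℂ β) hβ hδ hδβ
    have h5 := key2 β γ hβ hγ hβγ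
    have hδγ : starRingEnd ℂ β - γ ≠ 0 := sub_ne_zero.mpr (fun h => hne h.symm)
    have h6 : β + (starRingEnd ℂ β) + γ = 1 := by
      apply mul_left_cancel₀ hδγ
      linear_combination h4 - h5
    have h7 : starRingEnd ℂ β = (α:ℂ) := by linear_combination h6 - e1
    have h8 := congrArg Complex.im h7
    simp at h8
    exact hβim h8
  -- |β|² = α⁻¹
  have hns : ((Complex.normSq β : ℝ) : ℂ) = β * γ := by
    rw [hconj, Complex.mul_conj]
  have hns2 : α * Complex.normSq β = 1 := by
    have : ((α * Complex.normSq β : ℝ) : ℂ) = ((1:ℝ):ℂ) := by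
      push_cast
      rw [show ((Complex.normSq β : ℝ):ℂ) = β * γ from hns]
      exact hprod
    exact_mod_cast this
  have hnsval : Complex.normSq β = α⁻¹ := by
    field_simp at hns2 ⊢
    linarith [hns2]
  -- the key identity: (T(n+1) - α T(n)) (β - γ) = βⁿ - γⁿ
  have key : ∀ m : ℕ, ((trib (m+1) : ℂ) - (α:ℂ) * trib m) * (β - γ) = β ^ m - γ ^ m := by
    have H : ∀ m : ℕ, (((trib (m+1) : ℂ) - (α:ℂ) * trib m) * (β - γ) = β ^ m - γ ^ m)
        ∧ (((trib (m+2) : ℂ) - (α:ℂ) * trib (m+1)) * (β - γ) = β ^ (m+1) - γ ^ (m+1))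
        ∧ (((trib (m+3) : ℂ) - (α:ℂ) * trib (m+2)) * (β - γ) = β ^ (m+2) - γ ^ (m+2)) := by
      intro m
      induction m with
      | zero =>
        refine ⟨by norm_num [trib], by norm_num [trib], ?_⟩
        norm_num [trib, show trib 3 = 1 from rfl]
        linear_combination (γ - β) * e1
      | succ k ih =>
        obtain ⟨i0, i1, i2⟩ := ih
        refine ⟨i1, i2, ?_⟩
        have hrec : (trib (k+4) : ℂ) = (trib (k+3) : ℂ) + trib (k+2) + trib (k+1) := by
          rw [show trib (k+4) = trib (k+3) + trib (k+2) + trib (k+1) from rfl]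
          push_cast
          ring
        have hrec' : (trib (k+3) : ℂ) = (trib (k+2) : ℂ) + trib (k+1) + trib k := by
          rw [show trib (k+3) = trib (k+2) + trib (k+1) + trib k from rfl]
          push_cast
          ring
        have hb : β ^ (k+3) = β ^ (k+2) + β ^ (k+1) + β ^ k := by
          linear_combination β ^ k * hβ
        have hg : γ ^ (k+3) = γ ^ (k+2) + γ ^ (k+1) + γ ^ k := by
          linear_combination γ ^ k * hγ
        calc ((trib (k+4) : ℂ) - (α:ℂ) * trib (k+3)) * (β - γ)
            = ((trib (k+3) : ℂ) - (α:ℂ) * trib (k+2)) * (β - γ)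
              + ((trib (k+2) : ℂ) - (α:ℂ) * trib (k+1)) * (β - γ)
              + ((trib (k+1) : ℂ) - (α:ℂ) * trib k) * (β - γ) := by
                rw [hrec, hrec']; ring
          _ = β ^ (k+3) - γ ^ (k+3) := by
                rw [i2, i1, i0, hb, hg]; ring
    exact fun m => (H m).1
  -- the difference is real; relate absolute values
  have hcast : ∀ m : ℕ, (((trib (m+1) : ℝ) - α * trib m : ℝ) : ℂ)
      = (trib (m+1) : ℂ) - (α:ℂ) * trib m := by
    intro m; push_cast; ring
  have habs : |(trib (n+1) : ℝ) - α * trib n| * ‖β - γ‖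
      = ‖β ^ n - γ ^ n‖ := by
    rw [← Real.norm_eq_abs, ← Complex.norm_real, ← norm_mul, hcast n, key n]
  -- α is irrational (it cannot equal a ratio of tribonacci numbers)
  have hirr : ∀ a b : ℕ, 0 < b → (a : ℝ) = α * b → False := by
    intro a b hb hab
    have hNat : (a:ℝ) ^ 3 = (a:ℝ) ^ 2 * b + a * b ^ 2 + b ^ 3 := by
      linear_combination (b:ℝ)^3 * hα
        + ((a:ℝ)^2 + (a:ℝ)*α*b + α^2*(b:ℝ)^2 - (a:ℝ)*b - α*(b:ℝ)^2 - (b:ℝ)^2) * hab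
    have hN : a ^ 3 = a ^ 2 * b + a * b ^ 2 + b ^ 3 := by exact_mod_cast hNat
    set g := Nat.gcd a b with hg
    have hgpos : 0 < g := Nat.gcd_pos_of_pos_right a hb
    set a₁ := a / g with ha₁
    set b₁ := b / g with hb₁
    have haa : a = g * a₁ := (Nat.mul_div_cancel' (Nat.gcd_dvd_left a b)).symm
    have hbb : b = g * b₁ := (Nat.mul_div_cancel' (Nat.gcd_dvd_right a b)).symm
    have cop : Nat.Coprime a₁ b₁ := Nat.coprime_div_gcd_div_gcd hgpos
    have hN1 : g^3 * a₁ ^ 3 = g^3 * (a₁ ^ 2 * b₁ + a₁ * b₁ ^ 2 + b₁ ^ 3) := by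
      rw [haa, hbb] at hN; ring_nf at hN ⊢; linarith [hN]
    have hN2 : a₁ ^ 3 = a₁ ^ 2 * b₁ + a₁ * b₁ ^ 2 + b₁ ^ 3 :=
      Nat.eq_of_mul_eq_mul_left (by positivity) hN1
    have hdvd : b₁ ∣ a₁ ^ 3 := ⟨a₁ ^ 2 + a₁ * b₁ + b₁ ^ 2, by linarith [hN2, Nat.mul_comm b₁ (a₁^2 + a₁*b₁ + b₁^2)]⟩
    have hb₁ : b₁ = 1 := (Nat.Coprime.pow_right 3 cop.symm).eq_one_of_dvd hdvd
    -- so α = a₁, a natural number strictly between 1 and 2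
    have hbg : b = g := by rw [hbb, hb₁, Nat.mul_one]
    have hαa₁ : (a₁ : ℝ) = α := by
      have hgR : (0:ℝ) < g := by exact_mod_cast hgpos
      rw [haa, hbg] at hab
      push_cast at hab
      have h9 : (g:ℝ) * (a₁:ℝ) = (g:ℝ) * α := by linear_combination hab
      exact mul_left_cancel₀ (ne_of_gt hgR) h9
    have h1 : 1 < (a₁:ℝ) := by rw [hαa₁]; exact hα1
    have h2 : (a₁:ℝ) < 2 := by rw [hαa₁]; exact hα2
    have : 1 < a₁ := by exact_mod_cast h1
    have : a₁ < 2 := by exact_mod_cast h2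
    omega
  -- |Im(βⁿ)| < |β|ⁿ
  have him : |(β ^ n).im| < ‖β ^ n‖ := by
    rw [Complex.abs_im_lt_norm]
    intro hre
    -- then β^(2n) is real, so β^(2n) = γ^(2n) and T(2n+1) = α T(2n)
    match n, hre with
    | 0, hre => simp at hre
    | (m+1), hre =>
      set N := m + 1
      have him2 : (β ^ (2*N)).im = 0 := by
        rw [show 2*N = N + N by ring, pow_add, Complex.mul_im, hre]
        ring
      have hββ : γ ^ (2*N) = β ^ (2*N) := by
        rw [hconj, ← map_pow]
        exact Complex.conj_eq_iff_im.mpr him2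
      have h0 := key (2*N)
      rw [hββ, sub_self] at h0
      have h0' : (trib (2*N+1) : ℂ) - (α:ℂ) * trib (2*N) = 0 :=
        (mul_eq_zero.mp h0).resolve_right hβγ'
      have hreal : (trib (2*N+1) : ℝ) = α * trib (2*N) := by
        have : (((trib (2*N+1) : ℝ) - α * trib (2*N) : ℝ) : ℂ) = 0 := by
          rw [hcast]; exact h0'
        have := Complex.ofReal_eq_zero.mp this
        linarith
      have hpos : 0 < trib (2*N) := by
        have := trib_pos (2*m)
        simpa [show 2*N = 2*m + 2 by omega] using this
      exact hirr (trib (2*N+1)) (trib (2*N)) hpos hreal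
  -- |β|ⁿ = α ^ (-(n:ℝ)/2)
  have hβ0 : ‖β‖ ≠ 0 := by
    rw [norm_ne_zero_iff]
    intro h
    rw [h] at hβim
    simp at hβim
  have hβabs : ‖β‖ ^ 2 = α⁻¹ := by
    rw [Complex.sq_norm, hnsval]
  have hrabs : ‖β‖ ^ n = α ^ (-(n:ℝ)/2) := by
    have hbpos : 0 < ‖β‖ := lt_of_le_of_ne (norm_nonneg _) (Ne.symm hβ0)
    rw [show (-(n:ℝ)/2) = (-(1:ℝ)/2) * n by ring, Real.rpow_mul (le_of_lt hαpos),
      Real.rpow_natCast]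
    congr 1
    have h1 : (α ^ (-(1:ℝ)/2)) ^ 2 = α⁻¹ := by
      rw [← Real.rpow_natCast (α ^ (-(1:ℝ)/2)) 2, ← Real.rpow_mul (le_of_lt hαpos)]
      norm_num [Real.rpow_neg_one]
    have h2 : 0 < α ^ (-(1:ℝ)/2) := Real.rpow_pos_of_pos hαpos _
    nlinarith [hβabs, hbpos, h2]
  -- put it all together
  have hbound : ‖β ^ n - γ ^ n‖ < 2 * α ^ (-(n:ℝ)/2) := by
    have : γ ^ n = starRingEnd ℂ (β ^ n) := by rw [hconj, map_pow]
    rw [this, Complex.sub_conj]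
    rw [norm_mul, Complex.norm_I, mul_one, Complex.norm_real, Real.norm_eq_abs]
    calc |2 * (β ^ n).im| = 2 * |(β ^ n).im| := by rw [abs_mul]; norm_num
      _ < 2 * ‖β ^ n‖ := by linarith [him]
      _ = 2 * α ^ (-(n:ℝ)/2) := by rw [norm_pow, hrabs]
  have habspos : 0 < ‖β - γ‖ := norm_pos_iff.mpr hβγ'
  rw [lt_div_iff₀ habspos, habs]
  exact hbound
end

section
/- Let c(r) denote the r-th smallest positive integer whose Tribonacci representation set contains 3. Then for every r ≥ 1, the difference c(r+1) − c(r) equals either 2 or 3. -/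
/-- A Tribonacci representation set: a finite set of naturals, all at least 3,
    containing no three consecutive integers. -/
def IsTribRep (S : Finset ℕ) : Prop :=
  (∀ i ∈ S, 3 ≤ i) ∧ ∀ i : ℕ, ¬(i ∈ S ∧ i + 1 ∈ S ∧ i + 2 ∈ S)

lemma trib_add3 (n : ℕ) : trib (n+3) = trib (n+2) + trib (n+1) + trib n := rfl

lemma trib3 : trib 3 = 1 := rfl
lemma trib4 : trib 4 = 2 := rfl
lemma trib5 : trib 5 = 4 := rfl
lemma trib6 : trib 6 = 7 := rfl
lemma trib7 : trib 7 = 13 := rfl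

lemma trib_mono : Monotone trib := by
  apply monotone_nat_of_le_succ
  intro n
  match n with
  | 0 => simp [trib]
  | 1 => simp [trib]
  | n+2 => rw [show n+2+1 = n+3 from rfl, trib_add3]; omega

lemma trib_pos_s7 {n : ℕ} (h : 2 ≤ n) : 0 < trib n :=
  lt_of_lt_of_le (by norm_num [trib]) (trib_mono h)

lemma rep_subset {S T : Finset ℕ} (h : S ⊆ T) (hT : IsTribRep T) : IsTribRep S :=
  ⟨fun i hi => hT.1 i (h hi), fun i hi => hT.2 i ⟨h hi.1, h hi.2.1, h hi.2.2⟩⟩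

lemma trib_rec {m : ℕ} (hm : 2 ≤ m) :
    trib (m+1) = trib m + trib (m-1) + trib (m-2) := by
  have e1 : m - 2 + 3 = m + 1 := by omega
  have e2 : m - 2 + 2 = m := by omega
  have e3 : m - 2 + 1 = m - 1 := by omega
  rw [← e1, trib_add3, e2, e3]

/-- Key bound: a representation with all indices `≤ m` sums to less than `trib (m+1)`. -/
lemma sum_lt : ∀ m, 1 ≤ m → ∀ S : Finset ℕ, IsTribRep S → (∀ i ∈ S, i ≤ m) →
    ∑ i ∈ S, trib i < trib (m+1) := by
  intro m
  induction m using Nat.strong_induction_on with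
  | _ m ih =>
  intro hm S hS hle
  by_cases hmS : m ∈ S
  · have hm3 : 3 ≤ m := hS.1 m hmS
    by_cases hm1 : m - 1 ∈ S
    · -- both m, m-1 in S
      have hm4 : 4 ≤ m := by have := hS.1 _ hm1; omega
      have hm2 : m - 2 ∉ S := by
        intro h
        exact hS.2 (m-2) ⟨h, by rwa [show m-2+1 = m-1 by omega],
          by rwa [show m-2+2 = m by omega]⟩
      set S' := (S.erase m).erase (m-1) with hS'def
      have hsub : S' ⊆ S := (Finset.erase_subset _ _).trans (Finset.erase_subset _ _)
      have hS' : IsTribRep S' := rep_subset hsub hS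
      have hb : ∀ i ∈ S', i ≤ m - 3 := by
        intro i hi
        have h1 : i ≠ m - 1 := (Finset.mem_erase.1 hi).1
        have h2 : i ≠ m := (Finset.mem_erase.1 ((Finset.mem_erase.1 hi).2)).1
        have h3 : i ≠ m - 2 := fun e => hm2 (e ▸ hsub hi)
        have := hle i (hsub hi)
        omega
      have hsum' : ∑ i ∈ S', trib i < trib (m - 2) := by
        have := ih (m-3) (by omega) (by omega) S' hS' hb
        rwa [show m - 3 + 1 = m - 2 by omega] at this
      have hm1' : m - 1 ∈ S.erase m := Finset.mem_erase.2 ⟨by omega, hm1⟩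
      have e1 : ∑ i ∈ S.erase m, trib i + trib m = ∑ i ∈ S, trib i :=
        Finset.sum_erase_add _ _ hmS
      have e2 : ∑ i ∈ S', trib i + trib (m-1) = ∑ i ∈ S.erase m, trib i :=
        Finset.sum_erase_add _ _ hm1'
      have ht := trib_rec (show 2 ≤ m by omega)
      omega
    · -- m in S, m-1 not
      set S' := S.erase m with hS'def
      have hsub : S' ⊆ S := Finset.erase_subset _ _
      have hS' : IsTribRep S' := rep_subset hsub hS
      have hb : ∀ i ∈ S', i ≤ m - 2 := by
        intro i hi
        have h2 : i ≠ m := (Finset.mem_erase.1 hi).1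
        have h1 : i ≠ m - 1 := fun e => hm1 (e ▸ hsub hi)
        have := hle i (hsub hi)
        omega
      have hsum' : ∑ i ∈ S', trib i < trib (m - 1) := by
        have := ih (m-2) (by omega) (by omega) S' hS' hb
        rwa [show m - 2 + 1 = m - 1 by omega] at this
      have e1 : ∑ i ∈ S', trib i + trib m = ∑ i ∈ S, trib i :=
        Finset.sum_erase_add _ _ hmS
      have ht := trib_rec (show 2 ≤ m by omega)
      omega
  · rcases S.eq_empty_or_nonempty with rfl | ⟨j, hj⟩
    · simpa using trib_pos_s7 (show 2 ≤ m + 1 by omega)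
    · have hm3 : 3 ≤ m := le_trans (hS.1 j hj) (hle j hj)
      have hb : ∀ i ∈ S, i ≤ m - 1 := by
        intro i hi
        have := hle i hi
        have : i ≠ m := fun e => hmS (e ▸ hi)
        omega
      have := ih (m-1) (by omega) (by omega) S hS hb
      rw [show m - 1 + 1 = m by omega] at this
      exact lt_of_lt_of_le this (trib_mono (by omega))

lemma sum_ne_of_max_lt {S S' : Finset ℕ} (hS : IsTribRep S)
    (hne : S.Nonempty) (hne' : S'.Nonempty) (h : S.max' hne < S'.max' hne') :
    ∑ i ∈ S, trib i < ∑ i ∈ S', trib i := by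
  set m := S.max' hne
  set m' := S'.max' hne'
  have hm3 : 3 ≤ m := hS.1 m (S.max'_mem hne)
  have h1 : ∑ i ∈ S, trib i < trib (m+1) :=
    sum_lt m (by omega) S hS (fun i hi => S.le_max' i hi)
  have h2 : trib m' ≤ ∑ i ∈ S', trib i :=
    Finset.single_le_sum (fun i _ => Nat.zero_le _) (S'.max'_mem hne')
  exact lt_of_lt_of_le (lt_of_lt_of_le h1 (trib_mono (by omega))) h2

/-- Uniqueness of Tribonacci representations. -/
lemma rep_eq_aux : ∀ n, ∀ S S' : Finset ℕ, IsTribRep S → IsTribRep S' →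
    ∑ i ∈ S, trib i = n → ∑ i ∈ S', trib i = n → S = S' := by
  intro n
  induction n using Nat.strong_induction_on with
  | _ n ih =>
  intro S S' hS hS' h1 h2
  rcases S.eq_empty_or_nonempty with rfl | hne
  · simp at h1
    rcases S'.eq_empty_or_nonempty with rfl | ⟨j, hj⟩
    · rfl
    · exfalso
      have : trib j ≤ ∑ i ∈ S', trib i :=
        Finset.single_le_sum (fun i _ => Nat.zero_le _) hj
      have : 0 < trib j := trib_pos_s7 (by have := hS'.1 j hj; omega)
      omega
  · rcases S'.eq_empty_or_nonempty with rfl | hne'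
    · exfalso
      simp at h2
      obtain ⟨j, hj⟩ := hne
      have : trib j ≤ ∑ i ∈ S, trib i :=
        Finset.single_le_sum (fun i _ => Nat.zero_le _) hj
      have : 0 < trib j := trib_pos_s7 (by have := hS.1 j hj; omega)
      omega
    · set m := S.max' hne with hm
      set m' := S'.max' hne' with hm'
      have heq : m = m' := by
        rcases lt_trichotomy m m' with h | h | h
        · exact absurd (h1.trans h2.symm) (sum_ne_of_max_lt hS hne hne' h).ne
        · exact h
        · exact absurd (h2.trans h1.symm) (sum_ne_of_max_lt hS' hne' hne h).ne
      have hmS : m ∈ S := S.max'_mem hne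
      have hmS' : m ∈ S' := heq ▸ S'.max'_mem hne'
      have e1 : ∑ i ∈ S.erase m, trib i + trib m = n := by
        rw [Finset.sum_erase_add _ _ hmS]; exact h1
      have e2 : ∑ i ∈ S'.erase m, trib i + trib m = n := by
        rw [Finset.sum_erase_add _ _ hmS']; exact h2
      have hpos : 0 < trib m := trib_pos_s7 (by have := hS.1 m hmS; omega)
      have hlt : n - trib m < n := by omega
      have key := ih (n - trib m) hlt (S.erase m) (S'.erase m)
        (rep_subset (Finset.erase_subset _ _) hS)
        (rep_subset (Finset.erase_subset _ _) hS')
        (by omega) (by omega)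
      have : insert m (S.erase m) = insert m (S'.erase m) := by rw [key]
      rwa [Finset.insert_erase hmS, Finset.insert_erase hmS'] at this

lemma rep_insert {U : Finset ℕ} {k : ℕ} (hU : IsTribRep U) (hk3 : 3 ≤ k) (hk : k ∉ U)
    (h1 : ¬(k+1 ∈ U ∧ k+2 ∈ U)) (h2 : ¬(k-1 ∈ U ∧ k+1 ∈ U))
    (h3 : ¬(k-2 ∈ U ∧ k-1 ∈ U)) :
    IsTribRep (insert k U) := by
  constructor
  · intro i hi
    rcases Finset.mem_insert.1 hi with rfl | hi
    · exact hk3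
    · exact hU.1 i hi
  · rintro i ⟨ha, hb, hc⟩
    rcases Finset.mem_insert.1 ha with rfl | ha <;>
    rcases Finset.mem_insert.1 hb with hb | hb <;>
    rcases Finset.mem_insert.1 hc with hc | hc
    · omega
    · omega
    · omega
    · exact h1 ⟨hb, hc⟩
    · omega
    · exact h2 ⟨by rwa [show k - 1 = i by omega], by rwa [show k + 1 = i + 2 by omega]⟩
    · exact h3 ⟨by rwa [show k - 2 = i by omega], by rwa [show k - 1 = i + 1 by omega]⟩
    · exact hU.2 i ⟨ha, hb, hc⟩

/-- Adding `trib k` to a representation with `k ∉ U` and `k-1 ∉ U` keeps it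
representable; carries never touch indices below `k`. -/
lemma ins : ∀ (N : ℕ) (U : Finset ℕ), U.card ≤ N → ∀ k, IsTribRep U → 3 ≤ k →
    k ∉ U → k - 1 ∉ U →
    ∃ V : Finset ℕ, IsTribRep V ∧
      ∑ i ∈ V, trib i = ∑ i ∈ U, trib i + trib k ∧
      ∀ j, j < k → (j ∈ V ↔ j ∈ U) := by
  intro N
  induction N with
  | zero =>
    intro U hcard k hU hk3 hk hk1
    have hUe : U = ∅ := Finset.card_eq_zero.1 (Nat.le_zero.1 hcard)
    subst hUe
    refine ⟨{k}, ?_, by simp, by intro j hj; simp; omega⟩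
    exact ⟨fun i hi => by simp at hi; omega, fun i ⟨a, b, c⟩ => by simp at a b c; omega⟩
  | succ N ihN =>
    intro U hcard k hU hk3 hk hk1
    by_cases hb : k + 1 ∈ U ∧ k + 2 ∈ U
    · obtain ⟨hA, hB⟩ := hb
      have hC : k + 3 ∉ U := fun h =>
        hU.2 (k+1) ⟨hA, by rwa [show k+1+1 = k+2 from rfl], by rwa [show k+1+2 = k+3 from rfl]⟩
      set U1 := U.erase (k+2) with hU1
      set U' := U1.erase (k+1) with hU'
      have hmem1 : k + 1 ∈ U1 := Finset.mem_erase.2 ⟨by omega, hA⟩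
      have hsub : U' ⊆ U := (Finset.erase_subset _ _).trans (Finset.erase_subset _ _)
      have hU'rep : IsTribRep U' := rep_subset hsub hU
      have hcard' : U'.card ≤ N := by
        have c1 : U1.card = U.card - 1 := Finset.card_erase_of_mem hB
        have c2 : U'.card = U1.card - 1 := Finset.card_erase_of_mem hmem1
        omega
      have hnk3 : k + 3 ∉ U' := fun h => hC (hsub h)
      have hnk2 : k + 3 - 1 ∉ U' := by
        rw [show k + 3 - 1 = k + 2 by omega]
        intro h
        exact (Finset.mem_erase.1 (Finset.mem_erase.1 h).2).1 rfl
      obtain ⟨V, hVrep, hVsum, hVlow⟩ := ihN U' hcard' (k+3) hU'rep (by omega) hnk3 hnk2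
      have e1 : ∑ i ∈ U1, trib i + trib (k+2) = ∑ i ∈ U, trib i :=
        Finset.sum_erase_add _ _ hB
      have e2 : ∑ i ∈ U', trib i + trib (k+1) = ∑ i ∈ U1, trib i :=
        Finset.sum_erase_add _ _ hmem1
      refine ⟨V, hVrep, ?_, ?_⟩
      · have := trib_add3 k
        omega
      · intro j hj
        rw [hVlow j (by omega)]
        constructor
        · intro h; exact hsub h
        · intro h
          exact Finset.mem_erase.2 ⟨by omega, Finset.mem_erase.2 ⟨by omega, h⟩⟩
    · refine ⟨insert k U, rep_insert hU hk3 hk hb (fun h => hk1 h.1)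
        (fun h => hk1 h.2), ?_, ?_⟩
      · rw [Finset.sum_insert hk]; omega
      · intro j hj
        simp [Finset.mem_insert]
        omega

def HasRep3 (n : ℕ) : Prop :=
  ∃ S : Finset ℕ, IsTribRep S ∧ 3 ∈ S ∧ n = ∑ i ∈ S, trib i

lemma hasRep3_pos {n : ℕ} (h : HasRep3 n) : 0 < n := by
  obtain ⟨S, hS, h3, rfl⟩ := h
  have : trib 3 ≤ ∑ i ∈ S, trib i :=
    Finset.single_le_sum (fun i _ => Nat.zero_le _) h3
  rw [trib3] at this
  omega

/-- Two consecutive integers cannot both have a representation containing 3. -/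
lemma not_consec {n : ℕ} (h : HasRep3 n) (h' : HasRep3 (n+1)) : False := by
  obtain ⟨S, hS, h3, rfl⟩ := h
  obtain ⟨S', hS', h3', hsum'⟩ := h'
  -- build a rep V of (∑ S) + 1 with 3 ∉ V
  have main : ∃ V : Finset ℕ, IsTribRep V ∧
      ∑ i ∈ V, trib i = ∑ i ∈ S, trib i + 1 ∧ 3 ∉ V := by
    by_cases h4 : 4 ∈ S
    · have h5 : 5 ∉ S := fun h5 => hS.2 3 ⟨h3, h4, h5⟩
      set U := (S.erase 4).erase 3 with hU
      have h3e : (3:ℕ) ∈ S.erase 4 := Finset.mem_erase.2 ⟨by omega, h3⟩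
      have hsub : U ⊆ S := (Finset.erase_subset _ _).trans (Finset.erase_subset _ _)
      obtain ⟨V, hV, hVs, hVl⟩ := ins U.card U le_rfl 5 (rep_subset hsub hS) (by omega)
        (fun h => h5 (hsub h)) (by
          rw [show (5:ℕ) - 1 = 4 by omega]
          intro h
          exact (Finset.mem_erase.1 (Finset.mem_erase.1 h).2).1 rfl)
      refine ⟨V, hV, ?_, ?_⟩
      · have e1 : ∑ i ∈ S.erase 4, trib i + trib 4 = ∑ i ∈ S, trib i :=
          Finset.sum_erase_add _ _ h4
        have e2 : ∑ i ∈ U, trib i + trib 3 = ∑ i ∈ S.erase 4, trib i :=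
          Finset.sum_erase_add _ _ h3e
        rw [hVs, trib5]
        rw [trib4] at e1
        rw [trib3] at e2
        omega
      · rw [hVl 3 (by omega)]
        intro h
        exact (Finset.mem_erase.1 h).1 rfl
    · set U := S.erase 3 with hU
      obtain ⟨V, hV, hVs, hVl⟩ := ins U.card U le_rfl 4
        (rep_subset (Finset.erase_subset _ _) hS) (by omega)
        (fun h => h4 (Finset.erase_subset _ _ h))
        (by
          rw [show (4:ℕ) - 1 = 3 by omega]
          intro h
          exact (Finset.mem_erase.1 h).1 rfl)
      refine ⟨V, hV, ?_, ?_⟩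
      · have e1 : ∑ i ∈ U, trib i + trib 3 = ∑ i ∈ S, trib i :=
          Finset.sum_erase_add _ _ h3
        rw [hVs, trib4]
        rw [trib3] at e1
        omega
      · rw [hVl 3 (by omega)]
        intro h
        exact (Finset.mem_erase.1 h).1 rfl
  obtain ⟨V, hV, hVs, hV3⟩ := main
  have : V = S' := rep_eq_aux (∑ i ∈ S, trib i + 1) V S' hV hS' hVs hsum'.symm
  exact hV3 (this ▸ h3')

/-- From any member of the column, `n+2` or `n+3` is also in the column. -/
lemma step {n : ℕ} (h : HasRep3 n) : HasRep3 (n+2) ∨ HasRep3 (n+3) := by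
  obtain ⟨S, hS, h3, rfl⟩ := h
  by_cases h4 : 4 ∈ S
  · -- 4 ∈ S, hence 5 ∉ S; replace 4 by 5
    left
    have h5 : 5 ∉ S := fun h5 => hS.2 3 ⟨h3, h4, h5⟩
    set U := S.erase 4 with hU
    obtain ⟨V, hV, hVs, hVl⟩ := ins U.card U le_rfl 5
      (rep_subset (Finset.erase_subset _ _) hS) (by omega)
      (fun h => h5 (Finset.erase_subset _ _ h))
      (by
        rw [show (5:ℕ) - 1 = 4 by omega]
        intro h
        exact (Finset.mem_erase.1 h).1 rfl)
    refine ⟨V, hV, ?_, ?_⟩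
    · rw [hVl 3 (by omega)]
      exact Finset.mem_erase.2 ⟨by omega, h3⟩
    · have e1 : ∑ i ∈ U, trib i + trib 4 = ∑ i ∈ S, trib i :=
        Finset.sum_erase_add _ _ h4
      rw [hVs, trib5]
      rw [trib4] at e1
      omega
  · by_cases h5 : 5 ∈ S
    · by_cases h6 : 6 ∈ S
      · -- 5,6 ∈ S, 7 ∉ S: remove 5,6 insert 7, gain 2
        left
        have h7 : 7 ∉ S := fun h7 => hS.2 5 ⟨h5, h6, h7⟩
        set U := (S.erase 6).erase 5 with hU
        have h5e : (5:ℕ) ∈ S.erase 6 := Finset.mem_erase.2 ⟨by omega, h5⟩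
        have hsub : U ⊆ S := (Finset.erase_subset _ _).trans (Finset.erase_subset _ _)
        obtain ⟨V, hV, hVs, hVl⟩ := ins U.card U le_rfl 7 (rep_subset hsub hS) (by omega)
          (fun h => h7 (hsub h))
          (by
            rw [show (7:ℕ) - 1 = 6 by omega]
            intro h
            exact (Finset.mem_erase.1 (Finset.mem_erase.1 h).2).1 rfl)
        refine ⟨V, hV, ?_, ?_⟩
        · rw [hVl 3 (by omega)]
          exact Finset.mem_erase.2 ⟨by omega, Finset.mem_erase.2 ⟨by omega, h3⟩⟩
        · have e1 : ∑ i ∈ S.erase 6, trib i + trib 6 = ∑ i ∈ S, trib i :=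
            Finset.sum_erase_add _ _ h6
          have e2 : ∑ i ∈ U, trib i + trib 5 = ∑ i ∈ S.erase 6, trib i :=
            Finset.sum_erase_add _ _ h5e
          rw [hVs, trib7]
          rw [trib6] at e1
          rw [trib5] at e2
          omega
      · -- 5 ∈ S, 4,6 ∉ S : replace 5 by 6, gain 3
        right
        set U := S.erase 5 with hU
        obtain ⟨V, hV, hVs, hVl⟩ := ins U.card U le_rfl 6
          (rep_subset (Finset.erase_subset _ _) hS) (by omega)
          (fun h => h6 (Finset.erase_subset _ _ h))
          (by
            rw [show (6:ℕ) - 1 = 5 by omega]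
            intro h
            exact (Finset.mem_erase.1 h).1 rfl)
        refine ⟨V, hV, ?_, ?_⟩
        · rw [hVl 3 (by omega)]
          exact Finset.mem_erase.2 ⟨by omega, h3⟩
        · have e1 : ∑ i ∈ U, trib i + trib 5 = ∑ i ∈ S, trib i :=
            Finset.sum_erase_add _ _ h5
          rw [hVs, trib6]
          rw [trib5] at e1
          omega
    · -- 4, 5 ∉ S : insert 4, gain 2
      left
      have h2n : (2:ℕ) ∉ S := fun h => by have := hS.1 2 h; omega
      refine ⟨insert 4 S, rep_insert hS (by omega) h4
        (by rw [show (4:ℕ)+1 = 5 by omega]; exact fun h => h5 h.1)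
        (by rw [show (4:ℕ)+1 = 5 by omega]; exact fun h => h5 h.2)
        (by rw [show (4:ℕ)-2 = 2 by omega]; exact fun h => h2n h.1), ?_, ?_⟩
      · exact Finset.mem_insert.2 (Or.inr h3)
      · rw [Finset.sum_insert h4, trib4]
        omega

/-- If `c` enumerates (in increasing order, starting at index 0) the positive
    integers whose Tribonacci representation set contains 3 (the first column of
    the Trithoff array), then consecutive differences are always 2 or 3. -/
theorem first_column_differences (c : ℕ → ℕ) (hmono : StrictMono c)
    (hrange : ∀ n : ℕ, (∃ r : ℕ, c r = n) ↔
      (0 < n ∧ ∃ S : Finset ℕ, IsTribRep S ∧ 3 ∈ S ∧ n = ∑ i ∈ S, trib i)) :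
    ∀ r : ℕ, c (r + 1) - c r = 2 ∨ c (r + 1) - c r = 3 := by
  intro r
  obtain ⟨hpos, hP⟩ := (hrange (c r)).1 ⟨r, rfl⟩
  have hP' : HasRep3 (c r) := hP
  have hmem : ∀ m : ℕ, HasRep3 m → ∃ s, c s = m := fun m hm =>
    (hrange m).2 ⟨hasRep3_pos hm, hm⟩
  have hnotnext : c (r+1) ≠ c r + 1 := by
    intro he
    have := (hrange (c r + 1)).1 ⟨r+1, he⟩
    exact not_consec hP' this.2
  have hgt : c r < c (r+1) := hmono (by omega)
  rcases step hP' with h2 | h3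
  · obtain ⟨s, hs⟩ := hmem _ h2
    have hrs : r < s := hmono.lt_iff_lt.1 (by omega)
    have : c (r+1) ≤ c s := hmono.monotone (by omega)
    omega
  · obtain ⟨s, hs⟩ := hmem _ h3
    have hrs : r < s := hmono.lt_iff_lt.1 (by omega)
    have : c (r+1) ≤ c s := hmono.monotone (by omega)
    omega
end
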